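/- arXiv:2401.00597 — 2 statements merged into one kernel-verified Lean document; each statement's English description precedes it below -/
import Mathlib

section
/- Let K be a field of characteristic 0, R = K[x_1,…,x_n], m ⊆ R a maximal ideal, I ⊆ R an ideal and d ≥ 0 an integer. Then the local dual space of I + m^{d+1} at m equals the set of operators in the local dual space of I at m whose order is at most d: D_m[I + m^{d+1}] = { c ∈ D_m[I] : c(α) = 0 whenever |α| > d }. -/
set_option synthInstance.maxHeartbeats 1000000
set_option maxHeartbeats 1000000

open MvPolynomial

/-- The iterated partial derivative operator `∂^α` on `K[x_1, …, x_n]`. -/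
noncomputable def pdOp {K : Type*} [CommRing K] {n : ℕ} (α : Fin n →₀ ℕ) :
    Module.End K (MvPolynomial (Fin n) K) :=
  ((List.finRange n).map fun i =>
    ((pderiv i).toLinearMap : Module.End K (MvPolynomial (Fin n) K)) ^ (α i)).prod

/-- The action on the polynomial `f` of local differential operators at `m`
(finitely supported coefficient functions `c` with values in the residue field `R α m`):
`c ↦ Σ_α c(α) · π(∂^α f)`, as a linear map over `R ⧸ m`. -/
noncomputable def diffApply {K : Type*} [Field K] {n : ℕ}
    (m : Ideal (MvPolynomial (Fin n) K)) (f : MvPolynomial (Fin n) K) :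
    ((Fin n →₀ ℕ) →₀ (MvPolynomial (Fin n) K ⧸ m)) →ₗ[MvPolynomial (Fin n) K ⧸ m]
      (MvPolynomial (Fin n) K ⧸ m) :=
  Finsupp.linearCombination _ fun α => Ideal.Quotient.mk m (pdOp α f)

/-- The local dual space `D_m[I]` of the ideal `I` at the maximal ideal `m`:
all local differential operators at `m` annihilating every element of `I`. -/
noncomputable def dualSpace {K : Type*} [Field K] {n : ℕ}
    (I m : Ideal (MvPolynomial (Fin n) K)) :
    Submodule (MvPolynomial (Fin n) K ⧸ m) ((Fin n →₀ ℕ) →₀ (MvPolynomial (Fin n) K ⧸ m)) :=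
  ⨅ f ∈ I, LinearMap.ker (diffApply m f)

/-! ### Auxiliary lemmas -/

section Aux

variable {K : Type*} [CommRing K] {n : ℕ}

lemma DSaux.pderiv_pow_monomial (i : Fin n) (k : ℕ) (β : Fin n →₀ ℕ) (r : K) :
    (((pderiv i).toLinearMap : Module.End K (MvPolynomial (Fin n) K)) ^ k) (monomial β r) =
      monomial (β - Finsupp.single i k) (((β i).descFactorial k : K) * r) := by
  induction k with
  | zero => simp
  | succ k ih =>
    rw [pow_succ', Module.End.mul_apply, ih]
    rw [show ((pderiv i).toLinearMap : Module.End K (MvPolynomial (Fin n) K))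
      ((monomial (β - Finsupp.single i k)) (((β i).descFactorial k : K) * r))
      = pderiv i ((monomial (β - Finsupp.single i k)) (((β i).descFactorial k : K) * r)) from rfl,
      pderiv_monomial]
    have h1 : (β - Finsupp.single i k) i = β i - k := by
      simp [Finsupp.tsub_apply]
    rw [h1]
    have h2 : β - Finsupp.single i k - Finsupp.single i 1 = β - Finsupp.single i (k+1) := by
      rw [tsub_tsub, ← Finsupp.single_add]
    rw [h2, Nat.descFactorial_succ]
    congr 1
    push_cast
    ring

lemma DSaux.listsum_single_apply (l : List (Fin n)) (α : Fin n →₀ ℕ) (i : Fin n) (hi : i ∉ l) :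
    ((l.map fun j => Finsupp.single j (α j)).sum) i = 0 := by
  induction l with
  | nil => simp
  | cons j l ih =>
    simp only [List.map_cons, List.sum_cons, Finsupp.add_apply]
    rw [Finsupp.single_eq_of_ne (by rintro rfl; exact hi (List.mem_cons_self)),
      ih (fun h => hi (List.mem_cons_of_mem _ h))]

lemma DSaux.pdOpList_monomial (α : Fin n →₀ ℕ) (l : List (Fin n)) (hl : l.Nodup)
    (β : Fin n →₀ ℕ) (r : K) :
    ((l.map fun i =>
      ((pderiv i).toLinearMap : Module.End K (MvPolynomial (Fin n) K)) ^ (α i)).prod)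
        (monomial β r) =
      monomial (β - (l.map fun i => Finsupp.single i (α i)).sum)
        (((l.map fun i => (β i).descFactorial (α i)).prod : K) * r) := by
  induction l with
  | nil => simp
  | cons i l ih =>
    rw [List.nodup_cons] at hl
    simp only [List.map_cons, List.prod_cons, List.sum_cons, Module.End.mul_apply]
    rw [ih hl.2, DSaux.pderiv_pow_monomial]
    have h1 : (β - (l.map fun j => Finsupp.single j (α j)).sum) i = β i := by
      rw [Finsupp.tsub_apply, DSaux.listsum_single_apply l α i hl.1, Nat.sub_zero]
    rw [h1, tsub_tsub]
    push_cast
    rw [add_comm ((List.map (fun i => Finsupp.single i (α i)) l).sum), mul_assoc]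

lemma DSaux.finRange_sum_single (α : Fin n →₀ ℕ) :
    ((List.finRange n).map fun i => Finsupp.single i (α i)).sum = α := by
  rw [← Fin.sum_univ_def]
  ext j
  rw [Finsupp.finset_sum_apply]
  simp [Finsupp.single_apply]

lemma DSaux.pdOp_monomial (α β : Fin n →₀ ℕ) (r : K) :
    pdOp α (monomial β r) =
      monomial (β - α) (((∏ i : Fin n, (β i).descFactorial (α i) : ℕ) : K) * r) := by
  rw [pdOp, DSaux.pdOpList_monomial α _ (List.nodup_finRange n), DSaux.finRange_sum_single,
    Fin.prod_univ_def]

lemma DSaux.coeff_zero_pdOp (α : Fin n →₀ ℕ) (u : MvPolynomial (Fin n) K) :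
    coeff 0 (pdOp α u) = ((∏ i : Fin n, Nat.factorial (α i) : ℕ) : K) * coeff α u := by
  induction u using MvPolynomial.induction_on' with
  | add p q hp hq => simp [map_add, hp, hq, mul_add]
  | monomial β r =>
    rw [DSaux.pdOp_monomial, coeff_monomial, coeff_monomial]
    by_cases hba : β - α = 0
    · by_cases hbe : β = α
      · subst hbe
        simp [Nat.descFactorial_self]
      · rw [if_pos hba, if_neg hbe, mul_zero]
        have hle : β ≤ α := tsub_eq_zero_iff_le.mp hba
        obtain ⟨i, hi⟩ : ∃ i, β i < α i := by
          by_contra h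
          push_neg at h
          exact hbe (le_antisymm hle (Finsupp.le_def.mpr h))
        have : (β i).descFactorial (α i) = 0 := Nat.descFactorial_eq_zero_iff_lt.mpr hi
        rw [Finset.prod_eq_zero (Finset.mem_univ i) this]
        simp
    · rw [if_neg (by simpa using hba), if_neg (by rintro rfl; simp at hba), mul_zero]

end Aux

section Comm

variable {R S A B ι : Type*} [Semiring R] [Semiring S] [AddCommMonoid A] [AddCommMonoid B]
  [Module R A] [Module S B]

lemma DSaux.endPowComm (f : A → B) (dA : Module.End R A) (dB : Module.End S B)
    (h : ∀ u, dB (f u) = f (dA u)) (k : ℕ) (u : A) : (dB ^ k) (f u) = f ((dA ^ k) u) := by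
  induction k with
  | zero => rfl
  | succ k ih => rw [pow_succ', pow_succ', Module.End.mul_apply, Module.End.mul_apply, ih, h]

lemma DSaux.endListComm (f : A → B) (l : List ι) (dA : ι → Module.End R A)
    (dB : ι → Module.End S B) (h : ∀ i u, dB i (f u) = f (dA i u)) (u : A) :
    ((l.map dB).prod) (f u) = f (((l.map dA).prod) u) := by
  induction l with
  | nil => rfl
  | cons i l ih =>
    simp only [List.map_cons, List.prod_cons, Module.End.mul_apply, ih, h]

end Comm

section Comm2

variable {K L : Type*} [CommRing K] [CommRing L] {n : ℕ}

lemma DSaux.pdOp_map (ψ : K →+* L) (α : Fin n →₀ ℕ) (u : MvPolynomial (Fin n) K) :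
    pdOp α (map ψ u) = map ψ (pdOp α u) := by
  refine DSaux.endListComm (MvPolynomial.map ψ) (List.finRange n) _ _ (fun i u => ?_) u
  refine DSaux.endPowComm (MvPolynomial.map ψ) (pderiv i).toLinearMap (pderiv i).toLinearMap
    (fun v => ?_) (α i) u
  exact pderiv_map

lemma DSaux.pderiv_shift (a : Fin n → L) (j : Fin n) (u : MvPolynomial (Fin n) L) :
    pderiv j (aeval (fun i => (X i + C (a i) : MvPolynomial (Fin n) L)) u) =
      aeval (fun i => (X i + C (a i) : MvPolynomial (Fin n) L)) (pderiv j u) := by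
  induction u using MvPolynomial.induction_on with
  | C r => simp [MvPolynomial.algebraMap_eq]
  | add p q hp hq => simp only [map_add, hp, hq]
  | mul_X p i hp =>
    simp only [map_mul, pderiv_mul, map_add, hp, aeval_X, pderiv_C, add_zero]
    by_cases hij : j = i
    · subst hij; simp [pderiv_X_self]
    · simp [pderiv_X, Pi.single_eq_of_ne (Ne.symm hij)]

lemma DSaux.pdOp_shift (a : Fin n → L) (α : Fin n →₀ ℕ) (u : MvPolynomial (Fin n) L) :
    pdOp α (aeval (fun i => (X i + C (a i) : MvPolynomial (Fin n) L)) u) =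
      aeval (fun i => (X i + C (a i) : MvPolynomial (Fin n) L)) (pdOp α u) := by
  refine DSaux.endListComm _ (List.finRange n) _ _ (fun i u => ?_) u
  exact DSaux.endPowComm _ (pderiv i).toLinearMap (pderiv i).toLinearMap
    (fun v => DSaux.pderiv_shift a i v) (α i) u

end Comm2

section Memb

variable {K : Type*} [CommRing K] {n : ℕ} (m : Ideal (MvPolynomial (Fin n) K))

lemma DSaux.pderiv_mem_pow (i : Fin n) (k : ℕ) :
    ∀ f ∈ m ^ (k + 1), pderiv i f ∈ m ^ k := by
  induction k with
  | zero => intro f _; simp [Ideal.one_eq_top]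
  | succ k ih =>
    intro f hf
    rw [pow_succ] at hf
    refine Submodule.mul_induction_on hf (fun p hp q hq => ?_) (fun x y hx hy => ?_)
    · rw [pderiv_mul]
      apply Submodule.add_mem
      · rw [pow_succ]
        exact Submodule.mul_mem_mul (ih p hp) hq
      · exact Ideal.mul_mem_right _ _ hp
    · rw [map_add]; exact Submodule.add_mem _ hx hy

lemma DSaux.pderiv_pow_mem_pow (i : Fin n) (j k : ℕ) :
    ∀ f ∈ m ^ (k + j),
      (((pderiv i).toLinearMap : Module.End K (MvPolynomial (Fin n) K)) ^ j) f ∈ m ^ k := by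
  induction j with
  | zero => intro f hf; exact hf
  | succ j ih =>
    intro f hf
    rw [pow_succ, Module.End.mul_apply]
    refine ih _ ?_
    refine DSaux.pderiv_mem_pow m i (k + j) f ?_
    rwa [show k + j + 1 = k + (j + 1) by ring]

lemma DSaux.pdOpList_mem (α : Fin n →₀ ℕ) (l : List (Fin n)) (k : ℕ) :
    ∀ f ∈ m ^ (k + (l.map fun i => α i).sum),
      ((l.map fun i =>
        ((pderiv i).toLinearMap : Module.End K (MvPolynomial (Fin n) K)) ^ (α i)).prod) f
        ∈ m ^ k := by
  induction l generalizing k with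
  | nil => intro f hf; simpa using hf
  | cons i l ih =>
    intro f hf
    simp only [List.map_cons, List.prod_cons, Module.End.mul_apply]
    refine DSaux.pderiv_pow_mem_pow m i (α i) k _ ?_
    refine ih (k + α i) f ?_
    rwa [show k + α i + (l.map fun i => α i).sum
      = k + ((i :: l).map fun i => α i).sum by simp; ring]

lemma DSaux.pdOp_mem (α : Fin n →₀ ℕ) (d : ℕ) (hα : (α.sum fun _ k => k) ≤ d) :
    ∀ f ∈ m ^ (d + 1), pdOp α f ∈ m := by
  intro f hf
  have hsum : ((List.finRange n).map fun i => α i).sum = α.sum fun _ k => k := by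
    rw [← Fin.sum_univ_def]
    exact (Finsupp.sum_fintype α (fun _ k => k) (fun i => rfl)).symm
  have h1 : f ∈ m ^ (1 + ((List.finRange n).map fun i => α i).sum) := by
    refine Ideal.pow_le_pow_right ?_ hf
    rw [hsum]; omega
  have := DSaux.pdOpList_mem m α (List.finRange n) 1 f h1
  rw [← pow_one m]
  exact this

lemma DSaux.prod_pow_mem (J : Ideal (MvPolynomial (Fin n) K)) (g : Fin n → MvPolynomial (Fin n) K)
    (β : Fin n →₀ ℕ) (hg : ∀ i, g i ∈ J) (s : Finset (Fin n)) :
    (∏ i ∈ s, g i ^ β i) ∈ J ^ (∑ i ∈ s, β i) := by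
  classical
  induction s using Finset.induction_on with
  | empty => simp [Ideal.one_eq_top]
  | @insert a s ha ih =>
    rw [Finset.prod_insert ha, Finset.sum_insert ha, pow_add]
    exact Submodule.mul_mem_mul (Ideal.pow_mem_pow (hg a) _) ih

end Memb

/-- The truncated local dual space `D_m[I + m^(d+1)]` consists exactly of the operators
in `D_m[I]` of order at most `d`. -/
theorem dualSpace_add_pow_eq_truncation
    {K : Type*} [Field K] [CharZero K] {n : ℕ}
    (I m : Ideal (MvPolynomial (Fin n) K)) [m.IsMaximal] (d : ℕ) :
    ∀ c : (Fin n →₀ ℕ) →₀ (MvPolynomial (Fin n) K ⧸ m),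
      c ∈ dualSpace (I + m ^ (d + 1)) m ↔
        c ∈ dualSpace I m ∧ ∀ α : Fin n →₀ ℕ, d < (α.sum fun _ k => k) → c α = 0 := by
  intro c
  classical
  set L := MvPolynomial (Fin n) K ⧸ m with hLdef
  set a : Fin n → L := fun i => Ideal.Quotient.mk m (X i) with ha
  have hC1 : ∀ f : MvPolynomial (Fin n) K,
      Ideal.Quotient.mk m f = aeval a (map (algebraMap K L) f) := by
    intro f
    induction f using MvPolynomial.induction_on with
    | C r =>
      rw [map_C, aeval_C]
      rw [IsScalarTower.algebraMap_apply K (MvPolynomial (Fin n) K) L,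
        Ideal.Quotient.algebraMap_eq, MvPolynomial.algebraMap_eq]
      simp
    | add p q hp hq => rw [map_add, map_add, map_add, hp, hq]
    | mul_X p i hp => rw [map_mul, map_mul, map_mul, hp, map_X, aeval_X]
  have hC2 : ∀ v : MvPolynomial (Fin n) L,
      constantCoeff (aeval (fun i => (X i + C (a i) : MvPolynomial (Fin n) L)) v) = aeval a v := by
    intro v
    induction v using MvPolynomial.induction_on with
    | C r => simp [MvPolynomial.algebraMap_eq]
    | add p q hp hq => simp only [map_add, hp, hq]
    | mul_X p i hp => simp only [map_mul, aeval_X, map_add, hp, constantCoeff_X, constantCoeff_C,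
        zero_add]
  have hmem : ∀ J : Ideal (MvPolynomial (Fin n) K),
      c ∈ dualSpace J m ↔ ∀ f ∈ J, diffApply m f c = 0 := by
    intro J
    simp only [dualSpace, Submodule.mem_iInf, LinearMap.mem_ker]
  have hdiff : ∀ f, diffApply m f c
      = ∑ α ∈ c.support, c α * Ideal.Quotient.mk m (pdOp α f) := by
    intro f
    simp only [diffApply, Finsupp.linearCombination_apply, Finsupp.sum, smul_eq_mul]
  constructor
  · intro hc
    rw [hmem] at hc
    have hcI : c ∈ dualSpace I m := by
      rw [hmem]
      intro f hf
      exact hc f (by rw [Submodule.add_eq_sup]; exact Submodule.mem_sup_left hf)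
    refine ⟨hcI, ?_⟩
    intro α₀ hα₀
    by_contra hc0
    set S : Finset (Fin n →₀ ℕ) := c.support.filter (fun γ => d < γ.sum fun _ k => k) with hS
    have hSne : S.Nonempty := ⟨α₀, by
      simp only [hS, Finset.mem_filter, Finsupp.mem_support_iff]
      exact ⟨hc0, hα₀⟩⟩
    obtain ⟨β, hβS, hβmax⟩ := S.exists_maximal hSne
    have hβsupp : β ∈ c.support := (Finset.mem_filter.mp hβS).1
    have hβd : d < β.sum fun _ k => k := (Finset.mem_filter.mp hβS).2
    -- integrality of residues
    have halg : algebraMap K L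
        = (Ideal.Quotient.mk m).comp (C : K →+* MvPolynomial (Fin n) K) := by
      ext r
      rw [IsScalarTower.algebraMap_apply K (MvPolynomial (Fin n) K) L,
        Ideal.Quotient.algebraMap_eq, RingHom.comp_apply, MvPolynomial.algebraMap_eq]
    have hint : ∀ i, IsIntegral K (a i) := by
      intro i
      have h := MvPolynomial.quotient_mk_comp_C_isIntegral_of_isJacobsonRing m (a i)
      rw [IsIntegral, RingHom.IsIntegralElem, halg]
      exact h
    set q : Fin n → Polynomial K := fun i => minpoly K (a i) with hq
    set rr : Fin n → Polynomial L :=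
      fun i => ((q i).map (algebraMap K L)) /ₘ (Polynomial.X - Polynomial.C (a i)) with hrr
    have hroot : ∀ i, ((q i).map (algebraMap K L)).IsRoot (a i) := by
      intro i
      rw [Polynomial.IsRoot, Polynomial.eval_map, ← Polynomial.aeval_def]
      exact minpoly.aeval K (a i)
    have hfact : ∀ i, (q i).map (algebraMap K L)
        = (Polynomial.X - Polynomial.C (a i)) * rr i := by
      intro i
      exact (Polynomial.mul_divByMonic_eq_iff_isRoot.mpr (hroot i)).symm
    have hsep : ∀ i, ((q i).map (algebraMap K L)).Separable := by
      intro i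
      simp only [hq]
      exact ((minpoly.irreducible (hint i)).separable).map (f := algebraMap K L)
    have hrne : ∀ i, (rr i).eval (a i) ≠ 0 := by
      intro i hzero
      have hdvd : (Polynomial.X - Polynomial.C (a i)) * (Polynomial.X - Polynomial.C (a i))
          ∣ (q i).map (algebraMap K L) := by
        rw [hfact i]
        exact mul_dvd_mul_left _ (Polynomial.dvd_iff_isRoot.mpr hzero)
      have hsq : Squarefree ((q i).map (algebraMap K L)) := (hsep i).squarefree
      exact Polynomial.not_isUnit_X_sub_C (a i) (hsq _ hdvd)
    set Q : Fin n → MvPolynomial (Fin n) K :=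
      fun i => Polynomial.aeval (X i : MvPolynomial (Fin n) K) (q i) with hQ
    have hQm : ∀ i, Q i ∈ m := by
      intro i
      rw [← Ideal.Quotient.eq_zero_iff_mem]
      have h1 : Ideal.Quotient.mk m (Q i) = Polynomial.aeval (a i) (q i) := by
        have h2 := Polynomial.aeval_algHom_apply (Ideal.Quotient.mkₐ K m)
          (X i : MvPolynomial (Fin n) K) (q i)
        simpa [Ideal.Quotient.mkₐ_eq_mk] using h2.symm
      rw [h1, hq]
      exact minpoly.aeval K (a i)
    have hdegβ : (β.sum fun _ k => k) = ∑ i, β i := Finsupp.sum_fintype _ _ (fun _ => rfl)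
    set F : MvPolynomial (Fin n) K := ∏ i, Q i ^ β i with hF
    have hFm : F ∈ m ^ (d + 1) := by
      refine Ideal.pow_le_pow_right ?_ (DSaux.prod_pow_mem m Q β hQm Finset.univ)
      rw [← hdegβ]; omega
    have h0 : diffApply m F c = 0 :=
      hc F (by rw [Submodule.add_eq_sup]; exact Submodule.mem_sup_right hFm)
    -- the image of F over L, after translation, is a monomial times a unit at 0
    set h' : Fin n → MvPolynomial (Fin n) L :=
      fun i => Polynomial.aeval (X i : MvPolynomial (Fin n) L) (rr i) with hh'
    have hφQ : ∀ i, map (algebraMap K L) (Q i)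
        = (X i - C (a i)) * h' i := by
      intro i
      have h2 := Polynomial.aeval_algHom_apply
        (MvPolynomial.mapAlgHom (σ := Fin n) (Algebra.ofId K L))
        (X i : MvPolynomial (Fin n) K) (q i)
      have h3 : ∀ u : MvPolynomial (Fin n) K,
          MvPolynomial.mapAlgHom (σ := Fin n) (Algebra.ofId K L) u
            = map (algebraMap K L) u := fun u => rfl
      rw [h3, h3, map_X] at h2
      rw [← h2, ← Polynomial.aeval_map_algebraMap L, hfact i, map_mul]
      congr 1
      refine (map_sub (Polynomial.aeval (R := L) (X i : MvPolynomial (Fin n) L)) Polynomial.X (Polynomial.C (a i))).trans ?_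
      rw [Polynomial.aeval_X, Polynomial.aeval_C, MvPolynomial.algebraMap_eq]
    have hτQ : ∀ i, aeval (fun j => (X j + C (a j) : MvPolynomial (Fin n) L))
        (map (algebraMap K L) (Q i))
        = X i * aeval (fun j => (X j + C (a j) : MvPolynomial (Fin n) L)) (h' i) := by
      intro i
      rw [hφQ i, map_mul, map_sub, aeval_X, aeval_C, MvPolynomial.algebraMap_eq]
      ring
    have hmon : (monomial β 1 : MvPolynomial (Fin n) L) = ∏ i, X i ^ β i := by
      rw [monomial_eq, C_1, one_mul]
      exact Finsupp.prod_fintype _ _ (fun i => pow_zero _)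
    have hT : aeval (fun j => (X j + C (a j) : MvPolynomial (Fin n) L)) (map (algebraMap K L) F)
        = (∏ i, (aeval (fun j => (X j + C (a j) : MvPolynomial (Fin n) L)) (h' i)) ^ β i)
          * monomial β 1 := by
      calc aeval (fun j => (X j + C (a j) : MvPolynomial (Fin n) L)) (map (algebraMap K L) F)
          = ∏ i, (X i * aeval (fun j => (X j + C (a j) : MvPolynomial (Fin n) L)) (h' i)) ^ β i := by
            rw [hF]
            simp only [map_prod, map_pow]
            exact Finset.prod_congr rfl fun i _ => by rw [hτQ i]
        _ = _ := by
            simp only [mul_pow]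
            rw [Finset.prod_mul_distrib, ← hmon]
            ring
    have hterm : ∀ α, Ideal.Quotient.mk m (pdOp α F)
        = ((∏ i, Nat.factorial (α i) : ℕ) : L) *
          coeff α (aeval (fun j => (X j + C (a j) : MvPolynomial (Fin n) L))
            (map (algebraMap K L) F)) := by
      intro α
      rw [hC1, ← DSaux.pdOp_map, ← hC2, ← DSaux.pdOp_shift, constantCoeff_eq,
        DSaux.coeff_zero_pdOp]
    have h1 : ∑ α ∈ c.support, c α * (((∏ i, Nat.factorial (α i) : ℕ) : L) *
        coeff α (aeval (fun j => (X j + C (a j) : MvPolynomial (Fin n) L))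
          (map (algebraMap K L) F))) = 0 := by
      rw [← h0, hdiff]
      exact (Finset.sum_congr rfl fun α _ => by rw [hterm α]).symm
    haveI : IsDomain L := inferInstance
    haveI : CharZero L := charZero_of_injective_algebraMap ((algebraMap K L).injective)
    have hch' : ∀ i, constantCoeff
        (aeval (fun j => (X j + C (a j) : MvPolynomial (Fin n) L)) (h' i))
        = Polynomial.aeval (a i) (rr i) := by
      intro i
      rw [hC2]
      have h2 := Polynomial.aeval_algHom_apply
        (aeval a : MvPolynomial (Fin n) L →ₐ[L] L) (X i : MvPolynomial (Fin n) L) (rr i)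
      rw [aeval_X] at h2
      exact h2.symm
    have haev : ∀ i, Polynomial.aeval (a i) (rr i) = (rr i).eval (a i) := by
      intro i
      rw [Polynomial.coe_aeval_eq_eval]
    have hH0 : constantCoeff
        (∏ i, (aeval (fun j => (X j + C (a j) : MvPolynomial (Fin n) L)) (h' i)) ^ β i) ≠ 0 := by
      rw [map_prod]
      refine Finset.prod_ne_zero_iff.mpr fun i _ => ?_
      rw [map_pow, hch' i, haev i]
      exact pow_ne_zero _ (hrne i)
    have heq : c β * (((∏ i, Nat.factorial (β i) : ℕ) : L) *
        (constantCoeff (∏ i, (aeval (fun j => (X j + C (a j) : MvPolynomial (Fin n) L)) (h' i))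
          ^ β i) * 1)) = 0 := by
      have h2 : (∑ α ∈ c.support, c α * (((∏ i, Nat.factorial (α i) : ℕ) : L) *
          coeff α (aeval (fun j => (X j + C (a j) : MvPolynomial (Fin n) L))
            (map (algebraMap K L) F))))
          = c β * (((∏ i, Nat.factorial (β i) : ℕ) : L) *
          coeff β (aeval (fun j => (X j + C (a j) : MvPolynomial (Fin n) L))
            (map (algebraMap K L) F))) := by
        refine Finset.sum_eq_single β (fun α hαs hαβ => ?_) (fun hns => absurd hβsupp hns)
        by_cases hle : β ≤ α
        · exfalso
          have hlt : β < α := lt_of_le_of_ne hle (Ne.symm hαβ)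
          have hαS : α ∈ S := by
            simp only [hS, Finset.mem_filter]
            refine ⟨hαs, ?_⟩
            have hmono : (β.sum fun _ k => k) ≤ α.sum fun _ k => k := by
              rw [hdegβ, Finsupp.sum_fintype _ _ (fun _ => rfl)]
              exact Finset.sum_le_sum fun i _ => (Finsupp.le_def.mp hle) i
            omega
          exact absurd (hβmax hαS hlt.le) (not_le_of_gt hlt)
        · rw [hT, coeff_mul_monomial', if_neg hle, mul_zero, mul_zero]
      rw [← h1, h2, hT, coeff_mul_monomial', if_pos le_rfl, tsub_self, ← constantCoeff_eq]
    have hcβ : c β = 0 := by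
      have hne1 : ((∏ i, Nat.factorial (β i) : ℕ) : L) ≠ 0 :=
        Nat.cast_ne_zero.mpr (Finset.prod_ne_zero_iff.mpr fun i _ => Nat.factorial_ne_zero _)
      rcases mul_eq_zero.mp heq with h | h
      · exact h
      · rcases mul_eq_zero.mp h with h' | h'
        · exact absurd h' hne1
        · rw [mul_one] at h'
          exact absurd h' hH0
    exact (Finsupp.mem_support_iff.mp hβsupp) hcβ
  · rintro ⟨hcI, hord⟩
    rw [hmem] at hcI ⊢
    intro f hf
    rw [Submodule.add_eq_sup, Submodule.mem_sup] at hf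
    obtain ⟨g, hg, g2, hg2, rfl⟩ := hf
    have hadd : diffApply m (g + g2) c = diffApply m g c + diffApply m g2 c := by
      rw [hdiff, hdiff, hdiff, ← Finset.sum_add_distrib]
      refine Finset.sum_congr rfl fun α _ => ?_
      rw [map_add, map_add, mul_add]
    rw [hadd, hcI g hg, zero_add, hdiff]
    refine Finset.sum_eq_zero fun α hα => ?_
    have hαd : (α.sum fun _ k => k) ≤ d := by
      by_contra hgt
      push_neg at hgt
      exact (Finsupp.mem_support_iff.mp hα) (hord α hgt)
    rw [Ideal.Quotient.eq_zero_iff_mem.mpr (DSaux.pdOp_mem m α d hαd g2 hg2), mul_zero]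
end

section
/- Let K be a field of characteristic 0, R = K[x_1,…,x_n], m ⊆ R a maximal ideal and I ⊆ R an ideal. Then D_m[I : m^∞] is an (R/m)-subspace of D_m[I], and the quotient (R/m)-vector space E_m[I] := D_m[I] / D_m[I : m^∞] is finite-dimensional over R/m. -/
set_option synthInstance.maxHeartbeats 1000000
set_option maxHeartbeats 1000000

open MvPolynomial

/-- The quotient of a submodule `p` by a submodule `q` of `p`. -/
abbrev Submodule.subQuot {R M : Type*} [Ring R] [AddCommGroup M] [Module R M]
    (p : Submodule R M) (q : Submodule R ↥p) : Type _ := ↥p ⧸ q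

set_option maxHeartbeats 2000000

open Pointwise

section aux
variable {K : Type*} [Field K] {n : ℕ}

lemma mem_dualSpace_iff {I m : Ideal (MvPolynomial (Fin n) K)}
    {c : (Fin n →₀ ℕ) →₀ (MvPolynomial (Fin n) K ⧸ m)} :
    c ∈ dualSpace I m ↔ ∀ f ∈ I, diffApply m f c = 0 := by
  simp [dualSpace, Submodule.mem_iInf, LinearMap.mem_ker]

/-- `diffApply` with fixed coefficient vector `c`, as a `K`-linear map in the polynomial. -/
noncomputable def diffApplyK (m : Ideal (MvPolynomial (Fin n) K))
    (c : (Fin n →₀ ℕ) →₀ (MvPolynomial (Fin n) K ⧸ m)) :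
    MvPolynomial (Fin n) K →ₗ[K] (MvPolynomial (Fin n) K ⧸ m) where
  toFun f := diffApply m f c
  map_add' g h := by
    simp [diffApply, Finsupp.linearCombination_apply, Finsupp.sum, map_add, smul_add, mul_add,
      Finset.sum_add_distrib]
  map_smul' k g := by
    simp only [diffApply, Finsupp.linearCombination_apply, Finsupp.sum, map_smul,
      RingHom.id_apply, Finset.smul_sum]
    refine Finset.sum_congr rfl fun α _ => ?_
    rw [show (Ideal.Quotient.mk m) (k • (pdOp α) g) = k • (Ideal.Quotient.mk m) ((pdOp α) g)
      from Submodule.Quotient.mk_smul m k _, smul_comm]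

end aux

section aux2
variable {K : Type*} [Field K] {n : ℕ}

lemma finite_residue (m : Ideal (MvPolynomial (Fin n) K)) [m.IsMaximal] :
    Module.Finite K (MvPolynomial (Fin n) K ⧸ m) := by
  have : Algebra.FiniteType K (MvPolynomial (Fin n) K) := inferInstance
  have : Algebra.FiniteType K (MvPolynomial (Fin n) K ⧸ m) :=
    Algebra.FiniteType.of_surjective (Ideal.Quotient.mkₐ K m)
      (Ideal.Quotient.mkₐ_surjective K m)
  letI : Field (MvPolynomial (Fin n) K ⧸ m) := Ideal.Quotient.field m
  exact finite_of_finite_type_of_isJacobsonRing K (MvPolynomial (Fin n) K ⧸ m)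

lemma exists_span_aux (p : Ideal (MvPolynomial (Fin n) K))
    (hp : Module.Finite K (MvPolynomial (Fin n) K ⧸ p)) :
    ∃ B : Finset (MvPolynomial (Fin n) K), ∀ r : MvPolynomial (Fin n) K,
      r ∈ p.restrictScalars K ⊔ Submodule.span K (B : Set (MvPolynomial (Fin n) K)) := by
  classical
  obtain ⟨s, hs⟩ := hp.fg_top
  choose lift hlift using Ideal.Quotient.mk_surjective (I := p)
  refine ⟨s.image lift, fun r => ?_⟩
  set μ := (Ideal.Quotient.mkₐ K p).toLinearMap
  have hsub : (s : Set (MvPolynomial (Fin n) K ⧸ p)) ⊆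
      μ '' ((s.image lift : Finset (MvPolynomial (Fin n) K)) : Set (MvPolynomial (Fin n) K)) := by
    intro x hx
    exact ⟨lift x, by simpa using Finset.mem_image_of_mem lift hx, hlift x⟩
  have : μ r ∈ Submodule.map μ (Submodule.span K
      ((s.image lift : Finset (MvPolynomial (Fin n) K)) : Set (MvPolynomial (Fin n) K))) := by
    rw [← Submodule.span_image]
    exact Submodule.span_mono hsub (hs ▸ Submodule.mem_top :
      μ r ∈ Submodule.span K (s : Set (MvPolynomial (Fin n) K ⧸ p)))
  obtain ⟨b, hb, hbr⟩ := this
  have hrb : r - b ∈ p.restrictScalars K := by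
    have : Ideal.Quotient.mk p (r - b) = 0 := by
      have : μ (r - b) = 0 := by rw [map_sub, hbr, sub_self]
      simpa [μ] using this
    simpa [Submodule.restrictScalars_mem] using Ideal.Quotient.eq_zero_iff_mem.mp this
  have : r = (r - b) + b := by ring
  rw [this]
  exact Submodule.add_mem _ (Submodule.mem_sup_left hrb) (Submodule.mem_sup_right hb)

lemma exists_span_pow (m : Ideal (MvPolynomial (Fin n) K)) [m.IsMaximal] (N : ℕ) :
    ∃ B : Finset (MvPolynomial (Fin n) K), ∀ r : MvPolynomial (Fin n) K,
      r ∈ (m ^ N).restrictScalars K ⊔ Submodule.span K (B : Set (MvPolynomial (Fin n) K)) := by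
  classical
  induction N with
  | zero =>
    refine ⟨∅, fun r => Submodule.mem_sup_left ?_⟩
    simp [Ideal.one_eq_top]
  | succ N ih =>
    obtain ⟨B, hB⟩ := ih
    obtain ⟨B₁, hB₁⟩ := exists_span_aux m (finite_residue m)
    obtain ⟨G, hG⟩ := (IsNoetherian.noetherian (m ^ N) : (m ^ N).FG)
    refine ⟨B ∪ B₁ * G, fun r => ?_⟩
    obtain ⟨q, hq, b, hb, rfl⟩ := Submodule.mem_sup.mp (hB r)
    have hq' : q ∈ Submodule.span (MvPolynomial (Fin n) K) (G : Set (MvPolynomial (Fin n) K)) := by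
      rw [hG]; exact hq
    obtain ⟨h, -, hh⟩ := Submodule.mem_span_finset.mp hq'
    -- decompose each coefficient h g = p_g + c_g
    have key : ∀ g ∈ G, h g • g ∈
        (m ^ (N + 1)).restrictScalars K ⊔
          Submodule.span K ((B ∪ B₁ * G : Finset (MvPolynomial (Fin n) K)) :
            Set (MvPolynomial (Fin n) K)) := by
      intro g hgG
      obtain ⟨pg, hpg, cg, hcg, hdecomp⟩ := Submodule.mem_sup.mp (hB₁ (h g))
      have hgm : g ∈ m ^ N := by rw [← hG]; exact Submodule.subset_span hgG
      have h1 : pg * g ∈ (m ^ (N + 1)).restrictScalars K := by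
        simp only [Submodule.restrictScalars_mem]
        rw [pow_succ, mul_comm (m ^ N) m]
        exact Ideal.mul_mem_mul (by simpa using hpg) hgm
      have h2 : cg * g ∈ Submodule.span K
          ((B ∪ B₁ * G : Finset (MvPolynomial (Fin n) K)) : Set (MvPolynomial (Fin n) K)) := by
        have : cg * g ∈ Submodule.map (LinearMap.mulRight K g)
            (Submodule.span K (B₁ : Set (MvPolynomial (Fin n) K))) :=
          ⟨cg, hcg, rfl⟩
        rw [Submodule.map_span] at this
        refine Submodule.span_mono ?_ this
        rintro _ ⟨x, hx, rfl⟩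
        simp only [Finset.coe_union, Finset.coe_mul, Set.mem_union]
        exact Or.inr (Set.mul_mem_mul hx hgG)
      have : h g • g = pg * g + cg * g := by rw [← hdecomp, smul_eq_mul]; ring
      rw [this]
      exact Submodule.add_mem _ (Submodule.mem_sup_left h1) (Submodule.mem_sup_right h2)
    have hqmem : q ∈ (m ^ (N + 1)).restrictScalars K ⊔
        Submodule.span K ((B ∪ B₁ * G : Finset (MvPolynomial (Fin n) K)) :
          Set (MvPolynomial (Fin n) K)) := by
      rw [← hh]; exact Submodule.sum_mem _ fun g hg => key g hg
    refine Submodule.add_mem _ hqmem (Submodule.mem_sup_right ?_)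
    exact Submodule.span_mono (by simp) hb
end aux2

section aux3
variable {K : Type*} [Field K] {n : ℕ}

lemma sat_decomp (I m : Ideal (MvPolynomial (Fin n) K)) [m.IsMaximal] :
    ∃ F : Finset (MvPolynomial (Fin n) K),
      (↑F : Set (MvPolynomial (Fin n) K)) ⊆
        ((⨆ d : ℕ, Submodule.colon I ((m ^ d : Ideal (MvPolynomial (Fin n) K)) : Set (MvPolynomial (Fin n) K)) : Ideal (MvPolynomial (Fin n) K)) :
          Set (MvPolynomial (Fin n) K)) ∧
      ∀ s ∈ (⨆ d : ℕ, Submodule.colon I ((m ^ d : Ideal (MvPolynomial (Fin n) K)) : Set (MvPolynomial (Fin n) K)) : Ideal (MvPolynomial (Fin n) K)),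
        s ∈ I.restrictScalars K ⊔ Submodule.span K (↑F : Set (MvPolynomial (Fin n) K)) := by
  classical
  set S : Ideal (MvPolynomial (Fin n) K) := ⨆ d : ℕ, Submodule.colon I ((m ^ d : Ideal (MvPolynomial (Fin n) K)) : Set (MvPolynomial (Fin n) K)) with hSdef
  have mono : Monotone (fun d : ℕ => Submodule.colon I ((m ^ d : Ideal (MvPolynomial (Fin n) K)) : Set (MvPolynomial (Fin n) K))) := fun a b hab =>
    Submodule.colon_mono le_rfl (SetLike.coe_subset_coe.mpr (Ideal.pow_le_pow_right hab))
  obtain ⟨N, hN⟩ := monotone_stabilizes_iff_noetherian.mpr inferInstance ⟨_, mono⟩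
  have hS : S = Submodule.colon I ((m ^ N : Ideal (MvPolynomial (Fin n) K)) : Set (MvPolynomial (Fin n) K)) := by
    apply le_antisymm
    · exact iSup_le fun d => (le_total d N).elim (fun h => mono h) (fun h => ge_of_eq (hN d h))
    · exact le_iSup (fun d => Submodule.colon I ((m ^ d : Ideal (MvPolynomial (Fin n) K)) : Set (MvPolynomial (Fin n) K))) N
  obtain ⟨G, hG⟩ := (IsNoetherian.noetherian S : S.FG)
  obtain ⟨B, hB⟩ := exists_span_pow m N
  refine ⟨B * G, ?_, ?_⟩
  · rintro x hx
    simp only [Finset.coe_mul, Set.mem_mul] at hx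
    obtain ⟨b, hb, g, hg, rfl⟩ := hx
    have hgS : g ∈ S := by rw [← hG]; exact Submodule.subset_span hg
    exact Ideal.mul_mem_left _ b hgS
  · intro s hs
    have hs' : s ∈ Submodule.span (MvPolynomial (Fin n) K)
        (G : Set (MvPolynomial (Fin n) K)) := by rw [hG]; exact hs
    obtain ⟨h, -, hh⟩ := Submodule.mem_span_finset.mp hs'
    rw [← hh]
    refine Submodule.sum_mem _ fun g hgG => ?_
    have hgS : g ∈ S := by rw [← hG]; exact Submodule.subset_span hgG
    obtain ⟨q, hq, b, hb, hdecomp⟩ := Submodule.mem_sup.mp (hB (h g))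
    have h1 : q * g ∈ I.restrictScalars K := by
      simp only [Submodule.restrictScalars_mem]
      have := Submodule.mem_colon.mp (hS ▸ hgS) q ((Submodule.restrictScalars_mem _ _ _).mp hq)
      simpa [smul_eq_mul, mul_comm] using this
    have h2 : b * g ∈ Submodule.span K
        ((B * G : Finset (MvPolynomial (Fin n) K)) : Set (MvPolynomial (Fin n) K)) := by
      have : b * g ∈ Submodule.map (LinearMap.mulRight K g)
          (Submodule.span K (B : Set (MvPolynomial (Fin n) K))) := ⟨b, hb, rfl⟩
      rw [Submodule.map_span] at this
      refine Submodule.span_mono ?_ this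
      rintro _ ⟨x, hx, rfl⟩
      simp only [Finset.coe_mul]
      exact Set.mul_mem_mul hx hgG
    have : h g • g = q * g + b * g := by rw [← hdecomp, smul_eq_mul]; ring
    rw [this]
    exact Submodule.add_mem _ (Submodule.mem_sup_left h1) (Submodule.mem_sup_right h2)

end aux3

/-- Evaluation of local differential operators in `D_m[I]` on the finite set `F`. -/
noncomputable def dualEval {K : Type*} [Field K] {n : ℕ}
    (I m : Ideal (MvPolynomial (Fin n) K)) (F : Finset (MvPolynomial (Fin n) K)) :
    ↥(dualSpace I m) →ₗ[MvPolynomial (Fin n) K ⧸ m]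
      ({x // x ∈ F} → (MvPolynomial (Fin n) K ⧸ m)) :=
  (LinearMap.pi fun f : {x // x ∈ F} => diffApply m (f : MvPolynomial (Fin n) K)) ∘ₗ
    (dualSpace I m).subtype

/-- `D_m[I : m^∞]` is contained in `D_m[I]`, and the excess dual space
`E_m[I] = D_m[I] / D_m[I : m^∞]` is a finite-dimensional vector space over the residue
field `R ⧸ m` (a field since `m` is maximal; `Module.Finite` over a field is
finite-dimensionality). Here the saturation `I : m^∞` is `⨆ d, (I : m^d)`. -/
theorem excess_dual_space_finiteDimensional
    {K : Type*} [Field K] [CharZero K] {n : ℕ}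
    (I m : Ideal (MvPolynomial (Fin n) K)) [m.IsMaximal] :
    dualSpace (⨆ d : ℕ, Submodule.colon I ((m ^ d : Ideal (MvPolynomial (Fin n) K)) : Set (MvPolynomial (Fin n) K))) m ≤ dualSpace I m ∧
      Module.Finite (MvPolynomial (Fin n) K ⧸ m)
        ((dualSpace I m).subQuot
          (Submodule.comap (dualSpace I m).subtype
            (dualSpace (⨆ d : ℕ, Submodule.colon I ((m ^ d : Ideal (MvPolynomial (Fin n) K)) : Set (MvPolynomial (Fin n) K))) m))) := by
  classical
  set S : Ideal (MvPolynomial (Fin n) K) := ⨆ d : ℕ, Submodule.colon I ((m ^ d : Ideal (MvPolynomial (Fin n) K)) : Set (MvPolynomial (Fin n) K)) with hSdef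
  have hIS : I ≤ S := by
    refine le_trans ?_ (le_iSup (fun d => Submodule.colon I ((m ^ d : Ideal (MvPolynomial (Fin n) K)) : Set (MvPolynomial (Fin n) K))) 0)
    intro x hx
    exact Submodule.mem_colon.mpr fun p _ => Ideal.mul_mem_right p I hx
  constructor
  · simp only [dualSpace]
    exact le_iInf₂ fun f hf => iInf₂_le f (hIS hf)
  · obtain ⟨F, hFS, hFdec⟩ := sat_decomp I m
    have hΦ : ∀ c : ↥(dualSpace I m), dualEval I m F c = 0 ↔
        ∀ f ∈ F, diffApply m f (c : (Fin n →₀ ℕ) →₀ (MvPolynomial (Fin n) K ⧸ m)) = 0 := fun c => by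
      simp [dualEval, _root_.funext_iff, Subtype.forall]
    have hker : LinearMap.ker (dualEval I m F) =
        Submodule.comap (dualSpace I m).subtype (dualSpace S m) := by
      ext c
      rw [LinearMap.mem_ker, hΦ, Submodule.mem_comap]
      constructor
      · intro h0
        show ((c : (Fin n →₀ ℕ) →₀ (MvPolynomial (Fin n) K ⧸ m))) ∈ dualSpace S m
        rw [mem_dualSpace_iff]
        intro s hs
        have hker' : I.restrictScalars K ⊔ Submodule.span K (↑F : Set (MvPolynomial (Fin n) K)) ≤
            LinearMap.ker (diffApplyK m ↑c) := by
          refine sup_le (fun x hx => ?_) (Submodule.span_le.mpr fun x hx => ?_)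
          · have hx0 : diffApplyK m (c : (Fin n →₀ ℕ) →₀ (MvPolynomial (Fin n) K ⧸ m)) x = 0 :=
              mem_dualSpace_iff.mp c.2 x ((Submodule.restrictScalars_mem _ _ _).mp hx)
            exact LinearMap.mem_ker.mpr hx0
          · have hx0 : diffApplyK m (c : (Fin n →₀ ℕ) →₀ (MvPolynomial (Fin n) K ⧸ m)) x = 0 :=
              h0 x hx
            exact LinearMap.mem_ker.mpr hx0
        have hs0 : diffApplyK m (c : (Fin n →₀ ℕ) →₀ (MvPolynomial (Fin n) K ⧸ m)) s = 0 :=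
          LinearMap.mem_ker.mp (hker' (hFdec s hs))
        exact hs0
      · intro hc f hf
        exact mem_dualSpace_iff.mp hc f (hFS hf)
    exact Module.Finite.of_injective
      (Submodule.liftQ _ (dualEval I m F) hker.symm.le)
      (LinearMap.ker_eq_bot.mp (Submodule.ker_liftQ_eq_bot' _ _ hker.symm))
end
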